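/- A nondegenerate finite quadratic form (𝓛, q) is odd (i.e., there exists an element x ∈ 𝓛 of order 2 with q(x) ≠ 0 mod ℤ) if and only if 𝓛 contains ⟨1/2⟩ or ⟨−1/2⟩ as an orthogonal direct summand. -/

import Mathlib

noncomputable section

abbrev QmodTwo : Type := ℚ ⧸ AddSubgroup.zmultiples (2 : ℚ)
abbrev QmodOne : Type := ℚ ⧸ AddSubgroup.zmultiples (1 : ℚ)

def qmk : ℚ → QmodTwo := QuotientAddGroup.mk
def qmk1 : ℚ → QmodOne := QuotientAddGroup.mk

/-- The doubling homomorphism `ℚ/ℤ → ℚ/2ℤ`, `r ↦ 2r`. -/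
def dbl : QmodOne →+ QmodTwo :=
  QuotientAddGroup.map _ _ (AddMonoidHom.mk' (fun r : ℚ => 2 * r) (by intro a b; ring)) (by
    intro x hx
    obtain ⟨k, hk⟩ := AddSubgroup.mem_zmultiples_iff.mp hx
    refine AddSubgroup.mem_comap.mpr (AddSubgroup.mem_zmultiples_iff.mpr ⟨k, ?_⟩)
    simp only [AddMonoidHom.mk'_apply, ← hk, zsmul_eq_mul]
    ring)

/-- The natural projection `ℚ/2ℤ → ℚ/ℤ`. -/
def toQmodOne : QmodTwo →+ QmodOne :=
  QuotientAddGroup.map _ _ (AddMonoidHom.id ℚ) (by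
    intro x hx
    obtain ⟨k, hk⟩ := AddSubgroup.mem_zmultiples_iff.mp hx
    exact AddSubgroup.mem_comap.mpr (AddSubgroup.mem_zmultiples_iff.mpr ⟨2 * k, by
      simp only [AddMonoidHom.id_apply, ← hk, zsmul_eq_mul]
      push_cast
      ring⟩))

/-- `exp(iπ t)` for `t ∈ ℚ/2ℤ`. -/
def ePi : QmodTwo → ℂ :=
  Quotient.lift (fun r : ℚ => Complex.exp (Real.pi * Complex.I * (r : ℂ))) (by
    intro a b hab
    have h : -a + b ∈ AddSubgroup.zmultiples (2:ℚ) := QuotientAddGroup.leftRel_apply.mp hab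
    obtain ⟨k, hk⟩ := AddSubgroup.mem_zmultiples_iff.mp h
    have hb : (b : ℚ) = a + k * 2 := by
      have := hk
      rw [zsmul_eq_mul] at this
      linarith [this]
    rw [hb]
    push_cast
    rw [mul_add, Complex.exp_add]

    have : (Real.pi : ℂ) * Complex.I * ((k:ℂ) * 2) = (k : ℤ) * (2 * Real.pi * Complex.I) := by
      push_cast; ring
    rw [this, Complex.exp_int_mul_two_pi_mul_I, mul_one])

structure FinQuadForm (L : Type) [AddCommGroup L] where
  q : L → QmodTwo
  b : L → L → QmodOne
  b_symm : ∀ x y, b x y = b y x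
  b_add : ∀ x y z, b (x + y) z = b x z + b y z
  q_zsmul : ∀ (n : ℤ) (x : L), q (n • x) = (n ^ 2 : ℤ) • q x
  q_add : ∀ x y, q (x + y) - q x - q y = dbl (b x y)

variable {L : Type} [AddCommGroup L]

/-- The adjoint homomorphism `x ↦ b(x, ·)` into `Hom(L, ℚ/ℤ)`. -/
def FinQuadForm.toHom (F : FinQuadForm L) (x : L) : L →+ QmodOne :=
  AddMonoidHom.mk' (fun y => F.b x y) (fun y z => by
    show F.b x (y + z) = F.b x y + F.b x z
    rw [F.b_symm x (y + z), F.b_add, F.b_symm y x, F.b_symm z x])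

/-- Nondegeneracy: `x ↦ b(x, ·)` is an isomorphism onto `Hom(L, ℚ/ℤ)`. -/
def FinQuadForm.Nondegenerate (F : FinQuadForm L) : Prop :=
  Function.Bijective F.toHom

/-! ### Auxiliary lemmas -/

lemma qmk_zsmul (n : ℤ) (r : ℚ) : n • (qmk r) = qmk (n * r) := by
  rw [show qmk (n*r) = qmk (n • r) by norm_num, qmk, ← QuotientAddGroup.mk_zsmul]

lemma qmk1_zsmul (n : ℤ) (r : ℚ) : n • (qmk1 r) = qmk1 (n * r) := by
  rw [show qmk1 (n*r) = qmk1 (n • r) by norm_num, qmk1, ← QuotientAddGroup.mk_zsmul]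

lemma qmk_eq_iff (a b : ℚ) : qmk a = qmk b ↔ ∃ k : ℤ, a - b = 2 * k := by
  rw [qmk, QuotientAddGroup.eq_iff_sub_mem]
  constructor
  · rintro h; obtain ⟨k, hk⟩ := AddSubgroup.mem_zmultiples_iff.mp h
    exact ⟨k, by rw [← hk, zsmul_eq_mul]; ring⟩
  · rintro ⟨k, hk⟩
    exact AddSubgroup.mem_zmultiples_iff.mpr ⟨k, by rw [zsmul_eq_mul, hk]; ring⟩

lemma qmk1_eq_iff (a b : ℚ) : qmk1 a = qmk1 b ↔ ∃ k : ℤ, a - b = k := by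
  rw [qmk1, QuotientAddGroup.eq_iff_sub_mem]
  constructor
  · rintro h; obtain ⟨k, hk⟩ := AddSubgroup.mem_zmultiples_iff.mp h
    exact ⟨k, by rw [← hk, zsmul_eq_mul]; ring⟩
  · rintro ⟨k, hk⟩
    exact AddSubgroup.mem_zmultiples_iff.mpr ⟨k, by rw [zsmul_eq_mul, hk]; ring⟩

lemma qmk_zero : qmk 0 = 0 := rfl
lemma qmk1_zero : qmk1 0 = 0 := rfl

lemma qmk_eq_zero_iff (a : ℚ) : qmk a = 0 ↔ ∃ k : ℤ, a = 2 * k := by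
  rw [← qmk_zero, qmk_eq_iff]; simp

lemma qmk1_eq_zero_iff (a : ℚ) : qmk1 a = 0 ↔ ∃ k : ℤ, a = k := by
  rw [← qmk1_zero, qmk1_eq_iff]; simp

lemma toQmodOne_qmk (r : ℚ) : toQmodOne (qmk r) = qmk1 r := rfl

lemma qmk1_half_ne_zero : qmk1 (1/2) ≠ 0 := by
  intro h
  obtain ⟨k, hk⟩ := (qmk1_eq_zero_iff _).mp h
  have : (2*k : ℤ) = 1 := by exact_mod_cast (by linarith : (2*k:ℚ) = 1)
  omega

lemma qmk1_neg_half_ne_zero : qmk1 (-(1/2)) ≠ 0 := by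
  intro h
  obtain ⟨k, hk⟩ := (qmk1_eq_zero_iff _).mp h
  have : (2*k : ℤ) = -1 := by exact_mod_cast (by linarith : (2*k:ℚ) = -1)
  omega

lemma order_two_QmodOne (t : QmodOne) (h2 : (2:ℤ) • t = 0) (h0 : t ≠ 0) : t = qmk1 (1/2) := by
  obtain ⟨s, rfl⟩ := QuotientAddGroup.mk_surjective t
  rw [show (QuotientAddGroup.mk s : QmodOne) = qmk1 s from rfl] at *
  rw [qmk1_zsmul] at h2
  obtain ⟨j, hj⟩ := (qmk1_eq_zero_iff _).mp h2
  rcases Int.even_or_odd j with ⟨c, hc⟩ | ⟨c, hc⟩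
  · exfalso; apply h0; rw [qmk1_eq_zero_iff]
    exact ⟨c, by rw [hc] at hj; push_cast at hj ⊢; linarith⟩
  · rw [qmk1_eq_iff]
    exact ⟨c, by rw [hc] at hj; push_cast at hj ⊢; linarith⟩

lemma FinQuadForm.b_zero_left (F : FinQuadForm L) (y : L) : F.b 0 y = 0 := by
  have h := F.b_add 0 0 y
  rw [add_zero] at h
  exact right_eq_add.mp h

lemma FinQuadForm.b_zsmul_left (F : FinQuadForm L) (n : ℤ) (x y : L) :
    F.b (n • x) y = n • F.b x y := by
  have h := map_zsmul (F.toHom y) n x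
  calc F.b (n • x) y = F.b y (n • x) := F.b_symm _ _
    _ = n • F.b y x := h
    _ = n • F.b x y := by rw [F.b_symm]

lemma FinQuadForm.q_zero (F : FinQuadForm L) : F.q 0 = 0 := by
  have h := F.q_zsmul 0 0
  simpa using h

/-- STATEMENT 5: a nondegenerate finite quadratic form is odd (has an element of order 2
with `q(x) ≠ 0 mod ℤ`) if and only if it contains `⟨1/2⟩` or `⟨−1/2⟩` as an orthogonal
direct summand. -/
theorem odd_iff_half_summand (L : Type) [AddCommGroup L] [Finite L]
    (F : FinQuadForm L) (hnd : F.Nondegenerate) :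
    (∃ x : L, addOrderOf x = 2 ∧ toQmodOne (F.q x) ≠ 0) ↔
    (∃ A A' : AddSubgroup L, IsCompl A A' ∧
      (∀ x ∈ A, ∀ y ∈ A', F.b x y = 0) ∧
      ∃ g : L, g ∈ A ∧ addOrderOf g = 2 ∧ (∀ a ∈ A, a ∈ AddSubgroup.zmultiples g) ∧
        (F.q g = qmk (1 / 2) ∨ F.q g = qmk (-(1 / 2)))) := by
  constructor
  · rintro ⟨x, hx2, hqx⟩
    -- `2 • x = 0`
    have hx2' : (2:ℤ) • x = 0 := by
      have h : (2:ℕ) • x = 0 := by rw [← hx2]; exact addOrderOf_nsmul_eq_zero x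
      rw [show ((2:ℤ) • x) = (2:ℕ) • x from natCast_zsmul x 2]
      exact h
    have hxx0 : x + x = 0 := by rwa [two_zsmul] at hx2'
    -- represent q x
    obtain ⟨r, hr⟩ := QuotientAddGroup.mk_surjective (F.q x)
    have hr : qmk r = F.q x := hr
    -- `4 • q x = 0`
    have hq4 : qmk (4 * r) = 0 := by
      have h := F.q_zsmul 2 x
      rw [hx2', F.q_zero, ← hr, qmk_zsmul] at h
      norm_num at h
      exact h.symm
    obtain ⟨m, hm⟩ : ∃ m : ℤ, r = m / 2 := by
      obtain ⟨k, hk⟩ := (qmk_eq_zero_iff _).mp hq4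
      exact ⟨k, by linarith⟩
    -- m is odd
    have hmodd : m % 2 = 1 := by
      rcases Int.emod_two_eq m with h | h
      · exfalso
        apply hqx
        rw [← hr, toQmodOne_qmk, qmk1_eq_zero_iff]
        obtain ⟨c, hc⟩ : ∃ c : ℤ, m = 2 * c := ⟨m / 2, by omega⟩
        exact ⟨c, by rw [hm, hc]; push_cast; ring⟩
      · exact h
    -- b(x,x) = 1/2
    have h2bxy : ∀ y : L, (2:ℤ) • F.b x y = 0 := by
      intro y
      rw [← F.b_zsmul_left, hx2', F.b_zero_left]
    have hbxx : F.b x x = qmk1 (1/2) := by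
      apply order_two_QmodOne _ (h2bxy x)
      intro h0
      have hd := F.q_add x x
      rw [hxx0, F.q_zero, h0, map_zero, ← hr] at hd
      have h2q : qmk (2 * r) = 0 := by
        rw [show (2:ℚ) * r = ((2:ℤ):ℚ) * r by norm_num, ← qmk_zsmul, two_zsmul]
        have : qmk r + qmk r = (0:QmodTwo) - (0 - qmk r - qmk r) := by abel
        rw [this, hd, sub_zero]
      obtain ⟨k, hk⟩ := (qmk_eq_zero_iff _).mp h2q
      rw [hm] at hk
      have : (m:ℚ) = 2 * k := by linarith
      have : m = 2 * k := by exact_mod_cast this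
      omega
    have hbx_cases : ∀ y, F.b x y = 0 ∨ F.b x y = qmk1 (1/2) := by
      intro y
      rcases eq_or_ne (F.b x y) 0 with h | h
      · exact Or.inl h
      · exact Or.inr (order_two_QmodOne _ (h2bxy y) h)
    -- odd multiples of x equal x
    have hodd_smul : ∀ n : ℤ, n % 2 = 1 → n • x = x := by
      intro n hn
      obtain ⟨c, hc⟩ : ∃ c : ℤ, n = c * 2 + 1 := ⟨n / 2, by omega⟩
      rw [hc, add_smul, one_smul, mul_smul, hx2', smul_zero, zero_add]
    have heven_smul : ∀ n : ℤ, n % 2 = 0 → n • x = 0 := by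
      intro n hn
      obtain ⟨c, hc⟩ : ∃ c : ℤ, n = c * 2 := ⟨n / 2, by omega⟩
      rw [hc, mul_smul, hx2', smul_zero]
    refine ⟨AddSubgroup.zmultiples x, (F.toHom x).ker, ?_, ?_, x,
      AddSubgroup.mem_zmultiples x, hx2, fun a ha => ha, ?_⟩
    · rw [isCompl_iff]
      constructor
      · rw [AddSubgroup.disjoint_def]
        intro a haA haA'
        obtain ⟨n, rfl⟩ := AddSubgroup.mem_zmultiples_iff.mp haA
        rcases Int.emod_two_eq n with h | h
        · exact heven_smul n h
        · exfalso
          rw [hodd_smul n h] at haA'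
          have : F.b x x = 0 := haA'
          rw [hbxx] at this
          exact qmk1_half_ne_zero this
      · rw [codisjoint_iff, AddSubgroup.eq_top_iff']
        intro y
        rcases hbx_cases y with h | h
        · refine AddSubgroup.mem_sup.mpr ⟨0, zero_mem _, y, ?_, zero_add y⟩
          exact AddMonoidHom.mem_ker.mpr h
        · refine AddSubgroup.mem_sup.mpr ⟨x, AddSubgroup.mem_zmultiples x, y - x, ?_,
            add_sub_cancel x y⟩
          refine AddMonoidHom.mem_ker.mpr ?_
          show F.b x (y - x) = 0
          have h2 : F.b x (y - x) = F.b x y - F.b x x := map_sub (F.toHom x) y x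
          rw [h2, h, hbxx, sub_self]
    · intro a haA y hyA'
      obtain ⟨n, rfl⟩ := AddSubgroup.mem_zmultiples_iff.mp haA
      have hy : F.b x y = 0 := hyA'
      rw [F.b_zsmul_left, hy, smul_zero]
    · -- q x = ± 1/2
      rcases (by omega : m % 4 = 1 ∨ m % 4 = 3) with h | h
      · left
        rw [← hr, hm, qmk_eq_iff]
        obtain ⟨k, hk⟩ : ∃ k : ℤ, m = 4 * k + 1 := ⟨m / 4, by omega⟩
        exact ⟨k, by rw [hk]; push_cast; ring⟩
      · right
        rw [← hr, hm, qmk_eq_iff]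
        obtain ⟨k, hk⟩ : ∃ k : ℤ, m = 4 * k - 1 := ⟨(m+1) / 4, by omega⟩
        exact ⟨k, by rw [hk]; push_cast; ring⟩
  · rintro ⟨A, A', hc, horth, g, hgA, hg2, hgen, hq⟩
    refine ⟨g, hg2, ?_⟩
    rcases hq with h | h <;> rw [h, toQmodOne_qmk]
    · exact qmk1_half_ne_zero
    · exact qmk1_neg_half_ne_zero

end
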